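/- arXiv:2002.04149 — 6 statements merged into one kernel-verified Lean document; each statement's English description precedes it below -/
import Mathlib

section
/- If A and B are n×n Hermitian positive semidefinite complex matrices with B ⪯ A (i.e., A − B is positive semidefinite), then 0 ≤ per(B) ≤ per(A). -/
open Matrix Finset ComplexOrder

/-- The permanent of a square matrix. -/
noncomputable def perm {ι : Type*} [Fintype ι] [DecidableEq ι]
    (A : Matrix ι ι ℂ) : ℂ :=
  ∑ σ : Equiv.Perm ι, ∏ i, A i (σ i)

namespace PermProof

variable {n : ℕ} {α : Type*} [Fintype α] [DecidableEq α]

noncomputable def Psi (Z : α → Fin n → ℂ) (f : Fin n → α) : ℂ :=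
  ∑ σ : Equiv.Perm (Fin n), ∏ i, Z (f (σ i)) i

noncomputable def gram (Z : α → Fin n → ℂ) : Matrix (Fin n) (Fin n) ℂ :=
  Matrix.of fun i j => ∑ a, star (Z a i) * Z a j

lemma sum_H (Z : α → Fin n → ℂ) (ρ : Equiv.Perm (Fin n)) :
    (∑ f : Fin n → α, star (∏ i, Z (f (ρ i)) i) * ∏ i, Z (f i) i)
      = ∏ i, gram Z (ρ⁻¹ i) i := by
  have h1 : ∀ f : Fin n → α, (∏ i, Z (f (ρ i)) i) = ∏ i, Z (f i) (ρ⁻¹ i) := by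
    intro f
    rw [← Equiv.prod_comp ρ (fun j => Z (f j) (ρ⁻¹ j))]
    simp
  calc ∑ f : Fin n → α, star (∏ i, Z (f (ρ i)) i) * ∏ i, Z (f i) i
      = ∑ f : Fin n → α, ∏ i, star (Z (f i) (ρ⁻¹ i)) * Z (f i) i := by
        refine Finset.sum_congr rfl fun f _ => ?_
        rw [h1 f, star_prod, ← Finset.prod_mul_distrib]
    _ = ∏ i, ∑ a, star (Z a (ρ⁻¹ i)) * Z a i := by
        rw [Finset.prod_univ_sum, Fintype.piFinset_univ]
    _ = ∏ i, gram Z (ρ⁻¹ i) i := rfl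

lemma sum_perm (M : Matrix (Fin n) (Fin n) ℂ) :
    (∑ ρ : Equiv.Perm (Fin n), ∏ i, M (ρ⁻¹ i) i) = perm M := by
  refine Finset.sum_congr rfl fun ρ _ => ?_
  rw [← Equiv.prod_comp ρ (fun i => M (ρ⁻¹ i) i)]
  simp [perm]

lemma key (Z : α → Fin n → ℂ) :
    (∑ f : Fin n → α, star (Psi Z f) * Psi Z f)
      = (n.factorial : ℂ) * perm (gram Z) := by
  have step1 : ∀ σ τ : Equiv.Perm (Fin n),
      (∑ f : Fin n → α, star (∏ i, Z (f (σ i)) i) * ∏ i, Z (f (τ i)) i)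
        = ∏ i, gram Z ((τ⁻¹ * σ)⁻¹ i) i := by
    intro σ τ
    rw [← sum_H Z (τ⁻¹ * σ)]
    rw [← Equiv.sum_comp (Equiv.arrowCongr τ.symm (Equiv.refl α))
        (fun f => star (∏ i, Z (f ((τ⁻¹ * σ) i)) i) * ∏ i, Z (f i) i)]
    refine Finset.sum_congr rfl fun f _ => ?_
    simp [Equiv.arrowCongr, Equiv.Perm.mul_apply]
  calc (∑ f : Fin n → α, star (Psi Z f) * Psi Z f)
      = ∑ σ : Equiv.Perm (Fin n), ∑ τ : Equiv.Perm (Fin n),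
          ∑ f : Fin n → α, star (∏ i, Z (f (σ i)) i) * ∏ i, Z (f (τ i)) i := by
        simp only [Psi, star_sum, Finset.sum_mul_sum]
        rw [Finset.sum_comm]
        exact Finset.sum_congr rfl fun σ _ => Finset.sum_comm
    _ = ∑ σ : Equiv.Perm (Fin n), ∑ τ : Equiv.Perm (Fin n),
          ∏ i, gram Z ((τ⁻¹ * σ)⁻¹ i) i := by
        exact Finset.sum_congr rfl fun σ _ => Finset.sum_congr rfl fun τ _ => step1 σ τ
    _ = ∑ τ : Equiv.Perm (Fin n), ∑ σ : Equiv.Perm (Fin n),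
          ∏ i, gram Z ((τ⁻¹ * σ)⁻¹ i) i := Finset.sum_comm
    _ = ∑ τ : Equiv.Perm (Fin n), ∑ ρ : Equiv.Perm (Fin n),
          ∏ i, gram Z (ρ⁻¹ i) i := by
        refine Finset.sum_congr rfl fun τ _ => ?_
        exact Equiv.sum_comp (Equiv.mulLeft τ⁻¹) (fun ρ => ∏ i, gram Z (ρ⁻¹ i) i)
    _ = (n.factorial : ℂ) * perm (gram Z) := by
        rw [sum_perm, Finset.sum_const, Finset.card_univ, Fintype.card_perm,
          Fintype.card_fin, nsmul_eq_mul]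

end PermProof

open PermProof in
/-- Monotonicity of the permanent with respect to the Löwner order on HPSD matrices:
if `B ⪯ A` then `0 ≤ per B ≤ per A` (inequalities in the standard partial order on `ℂ`,
in particular both permanents are real). -/
theorem stmt1 (n : ℕ) (A B : Matrix (Fin n) (Fin n) ℂ)
    (hA : A.PosSemidef) (hB : B.PosSemidef) (hAB : (A - B).PosSemidef) :
    0 ≤ perm B ∧ perm B ≤ perm A := by
  obtain ⟨X, hX⟩ := (by open scoped MatrixOrder in exact CStarAlgebra.nonneg_iff_eq_star_mul_self.mp hB.nonneg)
  obtain ⟨Y, hY⟩ := (by open scoped MatrixOrder in exact CStarAlgebra.nonneg_iff_eq_star_mul_self.mp hAB.nonneg)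
  set XZ : Fin n → Fin n → ℂ := fun a i => X a i with hXZ
  set Z : (Fin n ⊕ Fin n) → Fin n → ℂ :=
    Sum.elim (fun a i => X a i) (fun a i => Y a i) with hZ
  have hBg : B = gram XZ := by
    rw [hX]; ext i j
    simp [PermProof.gram, Matrix.mul_apply, Matrix.conjTranspose_apply, hXZ]
  have hAg : A = gram Z := by
    have hA' : A = B + (A - B) := by abel
    rw [hA', hY, hX]; ext i j
    simp [PermProof.gram, Matrix.mul_apply, Matrix.conjTranspose_apply, hZ,
      Fintype.sum_sum_type, Matrix.add_apply]
  -- the key identities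
  have kB := key XZ
  have kA := key Z
  rw [← hBg] at kB
  rw [← hAg] at kA
  -- nonnegativity of each term
  have hnn : ∀ {β : Type} [Fintype β] (W : β → Fin n → ℂ) (f : Fin n → β),
      (0 : ℂ) ≤ star (Psi W f) * Psi W f := fun W f => star_mul_self_nonneg _
  have h0B : (0 : ℂ) ≤ (n.factorial : ℂ) * perm B := by
    rw [← kB]; exact Finset.sum_nonneg fun f _ => hnn XZ f
  -- sum over the X-block is a subsum of the full sum
  have hPsi : ∀ g : Fin n → Fin n, Psi XZ g = Psi Z (Sum.inl ∘ g) := fun g => rfl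
  have hsub : (n.factorial : ℂ) * perm B ≤ (n.factorial : ℂ) * perm A := by
    rw [← kB, ← kA]
    have hinj : ∀ x ∈ (Finset.univ : Finset (Fin n → Fin n)), ∀ y ∈ Finset.univ,
        (Sum.inl ∘ x : Fin n → Fin n ⊕ Fin n) = Sum.inl ∘ y → x = y := by
      intro x _ y _ h
      funext i
      exact Sum.inl_injective (congrFun h i)
    calc (∑ g : Fin n → Fin n, star (Psi XZ g) * Psi XZ g)
        = ∑ f ∈ Finset.image (fun g : Fin n → Fin n => Sum.inl ∘ g) Finset.univ,
            star (Psi Z f) * Psi Z f := by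
          rw [Finset.sum_image hinj]
          exact Finset.sum_congr rfl fun g _ => by rw [hPsi g]
      _ ≤ ∑ f : Fin n → Fin n ⊕ Fin n, star (Psi Z f) * Psi Z f :=
          Finset.sum_le_sum_of_subset_of_nonneg (Finset.subset_univ _)
            (fun f _ _ => hnn Z f)
  -- cancel the factor n!
  have hfacpos : (0:ℝ) < (n.factorial : ℝ) := by positivity
  have hinv : (0:ℂ) ≤ ((n.factorial : ℂ))⁻¹ := by
    have hc : ((n.factorial : ℂ))⁻¹ = (((n.factorial : ℝ)⁻¹ : ℝ) : ℂ) := by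
      rw [Complex.ofReal_inv, Complex.ofReal_natCast]
    rw [hc, Complex.zero_le_real]
    positivity
  have cancel : ∀ x y : ℂ, (n.factorial : ℂ) * x ≤ (n.factorial : ℂ) * y → x ≤ y := by
    intro x y h
    have h2 := mul_le_mul_of_nonneg_left h hinv
    have hne : (n.factorial : ℂ) ≠ 0 := Nat.cast_ne_zero.mpr (Nat.factorial_ne_zero n)
    rwa [← mul_assoc, ← mul_assoc, inv_mul_cancel₀ hne, one_mul, one_mul] at h2
  refine ⟨?_, cancel _ _ hsub⟩
  have := cancel 0 (perm B) (by rwa [mul_zero])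
  exact this
end

section
/- If A is an n×n Hermitian positive semidefinite matrix and D is a diagonal matrix with A ⪯ D, then per(A) ≤ ∏_{i=1}^n D_{ii}. -/
open Matrix Finset ComplexOrder

lemma eig_le_one {n : ℕ} {B : Matrix (Fin n) (Fin n) ℂ} (hH : B.IsHermitian)
    (hB1 : ((1 : Matrix (Fin n) (Fin n) ℂ) - B).PosSemidef) (k : Fin n) :
    hH.eigenvalues k ≤ 1 := by
  set v : Fin n → ℂ := ⇑(hH.eigenvectorBasis k) with hv
  have hvne : v ≠ 0 := by
    have h0 := hH.eigenvectorBasis.orthonormal.ne_zero k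
    intro h
    apply h0
    ext i
    exact congrFun h i
  have hmv : B *ᵥ v = hH.eigenvalues k • v := hH.mulVec_eigenvectorBasis k
  have h2 := hB1.dotProduct_mulVec_nonneg v
  rw [Matrix.sub_mulVec, Matrix.one_mulVec, hmv] at h2
  have hdot : star v ⬝ᵥ (v - hH.eigenvalues k • v)
      = (1 - (hH.eigenvalues k : ℂ)) * (star v ⬝ᵥ v) := by
    rw [dotProduct_sub, dotProduct_smul]
    ring_nf
    rw [Complex.real_smul]
    ring
  have hvv : star v ⬝ᵥ v = ((∑ i, Complex.normSq (v i) : ℝ) : ℂ) := by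
    push_cast
    refine Finset.sum_congr rfl fun i _ => ?_
    simp [Complex.normSq_eq_conj_mul_self]
  rw [hdot, hvv] at h2
  have hr : 0 < ∑ i, Complex.normSq (v i) := by
    obtain ⟨i, hi⟩ : ∃ i, v i ≠ 0 := Function.ne_iff.mp hvne
    exact Finset.sum_pos' (fun j _ => Complex.normSq_nonneg _)
      ⟨i, Finset.mem_univ i, Complex.normSq_pos.mpr hi⟩
  have h3 : (0:ℂ) ≤ (((1 - hH.eigenvalues k) * ∑ i, Complex.normSq (v i) : ℝ) : ℂ) := by
    rw [Complex.ofReal_mul]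
    convert h2 using 2
    push_cast
    ring
  rw [Complex.zero_le_real] at h3
  nlinarith

lemma perm_expand {n : ℕ} (C : Matrix (Fin n) (Fin n) ℂ) :
    perm (Cᴴ * C) = ∑ σ : Equiv.Perm (Fin n), ∑ f : Fin n → Fin n,
      (starRingEnd ℂ) (∏ i, C (f i) i) * ∏ i, C (f (σ i)) i := by
  rw [perm]
  rw [← Equiv.sum_comp (Equiv.inv (Equiv.Perm (Fin n)))
      (fun σ => ∑ f : Fin n → Fin n, (starRingEnd ℂ) (∏ i, C (f i) i) * ∏ i, C (f (σ i)) i)]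
  refine Finset.sum_congr rfl fun σ _ => ?_
  have h1 : ∀ i, (Cᴴ * C) i (σ i) = ∑ k, (starRingEnd ℂ) (C k i) * C k (σ i) := by
    intro i; rw [Matrix.mul_apply]; simp [Matrix.conjTranspose_apply]
  simp_rw [h1]
  rw [Finset.prod_univ_sum]
  rw [Fintype.piFinset_univ]
  refine Finset.sum_congr rfl fun f _ => ?_
  rw [Finset.prod_mul_distrib, ← map_prod]
  congr 1
  rw [← Equiv.prod_comp σ (fun i => C (f ((Equiv.inv (Equiv.Perm (Fin n)) σ) i)) i)]
  simp

lemma key_nonneg {n : ℕ} (b : (Fin n → Fin n) → ℂ) (w : (Fin n → Fin n) → ℝ)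
    (hw : ∀ f, 0 ≤ w f) (hwi : ∀ (f : Fin n → Fin n) (σ : Equiv.Perm (Fin n)), w (f ∘ σ) = w f) :
    0 ≤ ∑ σ : Equiv.Perm (Fin n), ∑ f : Fin n → Fin n,
        (w f : ℂ) * ((starRingEnd ℂ) (b f) * b (f ∘ σ)) := by
  set T : (Fin n → Fin n) → ℂ := fun f => ∑ ρ : Equiv.Perm (Fin n), b (f ∘ ρ) with hT
  set S := ∑ σ : Equiv.Perm (Fin n), ∑ f : Fin n → Fin n,
        (w f : ℂ) * ((starRingEnd ℂ) (b f) * b (f ∘ σ)) with hS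
  have hstep : ∀ τ : Equiv.Perm (Fin n),
      S = ∑ f : Fin n → Fin n, (w f : ℂ) * ((starRingEnd ℂ) (b (f ∘ τ)) * T f) := by
    intro τ
    rw [hS, Finset.sum_comm]
    rw [← Equiv.sum_comp (Equiv.arrowCongr τ.symm (Equiv.refl (Fin n)))
      (fun f => ∑ σ : Equiv.Perm (Fin n), (w f : ℂ) * ((starRingEnd ℂ) (b f) * b (f ∘ σ)))]
    refine Finset.sum_congr rfl fun f _ => ?_
    have h1 : (Equiv.arrowCongr τ.symm (Equiv.refl (Fin n))) f = f ∘ τ := rfl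
    rw [h1, ← Finset.mul_sum, ← Finset.mul_sum, hwi f τ]
    congr 1
    congr 1
    rw [hT]
    show _ = ∑ ρ : Equiv.Perm (Fin n), b (f ∘ ⇑ρ)
    rw [← Equiv.sum_comp (Equiv.mulLeft τ) (fun ρ => b (f ∘ ρ))]
    rfl
  have hmul : (n.factorial : ℂ) * S = ∑ f : Fin n → Fin n,
      (w f : ℂ) * ((starRingEnd ℂ) (T f) * T f) := by
    have : ∑ τ : Equiv.Perm (Fin n), S = (n.factorial : ℂ) * S := by
      rw [Finset.sum_const, Finset.card_univ, Fintype.card_perm, nsmul_eq_mul]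
      simp
    rw [← this]
    calc ∑ τ : Equiv.Perm (Fin n), S
        = ∑ τ : Equiv.Perm (Fin n), ∑ f : Fin n → Fin n,
            (w f : ℂ) * ((starRingEnd ℂ) (b (f ∘ τ)) * T f) := by
          exact Finset.sum_congr rfl fun τ _ => hstep τ
      _ = ∑ f : Fin n → Fin n, (w f : ℂ) * ((starRingEnd ℂ) (T f) * T f) := by
          rw [Finset.sum_comm]
          refine Finset.sum_congr rfl fun f _ => ?_
          rw [← Finset.mul_sum, ← Finset.sum_mul, ← map_sum]
  have hnn : 0 ≤ (n.factorial : ℂ) * S := by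
    rw [hmul]
    refine Finset.sum_nonneg fun f _ => mul_nonneg ?_ ?_
    · exact_mod_cast Complex.zero_le_real.mpr (hw f)
    · exact star_mul_self_nonneg (T f)
  have hinv : (0:ℂ) ≤ ((n.factorial : ℂ))⁻¹ := by
    have h2 : ((n.factorial : ℂ))⁻¹ = (((n.factorial : ℝ)⁻¹ : ℝ) : ℂ) := by
      rw [Complex.ofReal_inv]; norm_num
    rw [h2]
    rw [Complex.zero_le_real]
    positivity
  have : S = ((n.factorial : ℂ))⁻¹ * ((n.factorial : ℂ) * S) := by
    rw [← mul_assoc, inv_mul_cancel₀ (by exact_mod_cast n.factorial_ne_zero), one_mul]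
  rw [this]
  exact mul_nonneg hinv hnn

lemma perm_le_one {n : ℕ} {B : Matrix (Fin n) (Fin n) ℂ} (hB : B.PosSemidef)
    (hB1 : ((1 : Matrix (Fin n) (Fin n) ℂ) - B).PosSemidef) :
    perm B ≤ 1 := by
  have hH : B.IsHermitian := hB.1
  set lam : Fin n → ℝ := hH.eigenvalues with hlam
  have hl0 : ∀ k, 0 ≤ lam k := fun k => hB.eigenvalues_nonneg k
  have hl1 : ∀ k, lam k ≤ 1 := fun k => eig_le_one hH hB1 k
  set U : Matrix (Fin n) (Fin n) ℂ := (hH.eigenvectorUnitary : Matrix (Fin n) (Fin n) ℂ) with hU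
  have hUU : U * Uᴴ = 1 := by
    have h := Unitary.mul_star_self_of_mem (hH.eigenvectorUnitary).2
    rwa [Matrix.star_eq_conjTranspose] at h
  set s : Fin n → ℂ := fun k => (Real.sqrt (lam k) : ℂ) with hs
  set C : Matrix (Fin n) (Fin n) ℂ := diagonal s * Uᴴ with hC
  set E : Matrix (Fin n) (Fin n) ℂ := Uᴴ with hE
  have hCH : Cᴴ = U * diagonal s := by
    rw [hC, conjTranspose_mul, conjTranspose_conjTranspose, diagonal_conjTranspose]
    have hss : star s = s := by funext k; simp [hs, Complex.conj_ofReal]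
    rw [hss]
  have hCC : Cᴴ * C = B := by
    rw [hCH, hC, mul_assoc, ← mul_assoc (diagonal s), diagonal_mul_diagonal, ← mul_assoc]
    have h2 : (fun k => s k * s k) = (RCLike.ofReal ∘ lam : Fin n → ℂ) := by
      funext k
      simp only [hs, Function.comp, RCLike.ofReal]
      rw [← Complex.ofReal_mul, Real.mul_self_sqrt (hl0 k)]
      rfl
    rw [h2]
    have h3 := hH.spectral_theorem
    rw [Unitary.conjStarAlgAut_apply, Matrix.star_eq_conjTranspose] at h3
    exact h3.symm
  have hEE : Eᴴ * E = 1 := by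
    rw [hE, conjTranspose_conjTranspose, hUU]
  have hCentry : ∀ k i, C k i = s k * E k i := by
    intro k i; rw [hC, hE]; simp [Matrix.diagonal_mul]
  -- products
  have hbC : ∀ f : Fin n → Fin n, (∏ i, C (f i) i) =
      (∏ i, s (f i)) * ∏ i, E (f i) i := by
    intro f
    simp_rw [hCentry]
    rw [Finset.prod_mul_distrib]
  have hperm1 : perm (1 : Matrix (Fin n) (Fin n) ℂ) = 1 := by
    rw [perm, Finset.sum_eq_single (1 : Equiv.Perm (Fin n))]
    · simp [Matrix.one_apply]
    · intro σ _ hσ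
      obtain ⟨i, hi⟩ : ∃ i, σ i ≠ i := by
        by_contra h; push_neg at h; exact hσ (Equiv.ext h)
      exact Finset.prod_eq_zero (Finset.mem_univ i) (Matrix.one_apply_ne (Ne.symm hi))
    · simp
  rw [← sub_nonneg]
  have hexp : (1 : ℂ) - perm B =
      ∑ σ : Equiv.Perm (Fin n), ∑ f : Fin n → Fin n,
        ((1 - ∏ i, lam (f i) : ℝ) : ℂ) *
          ((starRingEnd ℂ) (∏ i, E (f i) i) * ∏ i, E (f (σ i)) i) := by
    rw [← hperm1, ← hEE, ← hCC, perm_expand, perm_expand, ← Finset.sum_sub_distrib]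
    refine Finset.sum_congr rfl fun σ _ => ?_
    rw [← Finset.sum_sub_distrib]
    refine Finset.sum_congr rfl fun f _ => ?_
    rw [hbC, hbC]
    have hprod : (∏ i, s (f (σ i))) = ∏ i, s (f i) :=
      Equiv.prod_comp σ (fun i => s (f i))
    have hss : (∏ i, s (f i)) * (∏ i, s (f i)) = ((∏ i, lam (f i) : ℝ) : ℂ) := by
      rw [← Finset.prod_mul_distrib]
      push_cast
      refine Finset.prod_congr rfl fun i _ => ?_
      rw [hs, ← Complex.ofReal_mul, Real.mul_self_sqrt (hl0 (f i))]
    have hsreal : (starRingEnd ℂ) (∏ i, s (f i)) = ∏ i, s (f i) := by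
      rw [map_prod]
      refine Finset.prod_congr rfl fun i _ => ?_
      simp [hs, Complex.conj_ofReal]
    rw [map_mul (starRingEnd ℂ) (∏ i, s (f i)) (∏ i, E (f i) i), hsreal, hprod]
    have hone : ((1 - ∏ i, lam (f i) : ℝ) : ℂ) = 1 - ((∏ i, lam (f i) : ℝ) : ℂ) := by
      push_cast; ring
    rw [hone, ← hss]
    ring
  rw [hexp]
  refine key_nonneg (fun f => ∏ i, E (f i) i) (fun f => 1 - ∏ i, lam (f i)) ?_ ?_
  · intro f
    show (0:ℝ) ≤ 1 - ∏ i, lam (f i)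
    have := Finset.prod_le_one (s := (Finset.univ : Finset (Fin n))) (fun i _ => hl0 (f i)) (fun i _ => hl1 (f i))
    linarith
  · intro f σ
    show (1 - ∏ i, lam ((f ∘ σ) i)) = (1 - ∏ i, lam (f i))
    simp only [Function.comp_apply]
    rw [Equiv.prod_comp σ (fun i => lam (f i))]

lemma col_eq_zero {n : ℕ} {A : Matrix (Fin n) (Fin n) ℂ} (hA : A.PosSemidef)
    {i : Fin n} (hii : A i i = 0) (j : Fin n) : A j i = 0 := by
  obtain ⟨M, hM⟩ := (by open MatrixOrder in exact CStarAlgebra.nonneg_iff_eq_star_mul_self.mp hA.nonneg :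
    ∃ M : Matrix (Fin n) (Fin n) ℂ, A = star M * M)
  rw [Matrix.star_eq_conjTranspose] at hM
  subst hM
  have h1 : ((∑ k, Complex.normSq (M k i) : ℝ) : ℂ) = 0 := by
    rw [← hii, Matrix.mul_apply]
    push_cast
    refine Finset.sum_congr rfl fun k _ => ?_
    simp [Matrix.conjTranspose_apply, Complex.normSq_eq_conj_mul_self]
  have h2 : (∑ k, Complex.normSq (M k i) : ℝ) = 0 := by exact_mod_cast h1
  have h3 : ∀ k, M k i = 0 := by
    intro k
    have := (Finset.sum_eq_zero_iff_of_nonneg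
      (fun k _ => Complex.normSq_nonneg (M k i))).mp h2 k (Finset.mem_univ k)
    exact Complex.normSq_eq_zero.mp this
  rw [Matrix.mul_apply]
  refine Finset.sum_eq_zero fun k _ => ?_
  rw [h3 k, mul_zero]

/-- If `A` is HPSD and `D` is a diagonal matrix with `A ⪯ D`,
then `per A ≤ ∏ᵢ Dᵢᵢ` (in the standard partial order on `ℂ`). -/
theorem stmt2 (n : ℕ) (A : Matrix (Fin n) (Fin n) ℂ) (d : Fin n → ℂ)
    (hA : A.PosSemidef) (hAD : (Matrix.diagonal d - A).PosSemidef) :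
    perm A ≤ ∏ i, d i := by
  have hD : (Matrix.diagonal d).PosSemidef := by
    have h := hAD.add hA
    simpa using h
  have hd : ∀ i, 0 ≤ d i := posSemidef_diagonal_iff.mp hD
  have hsingle : ∀ (M : Matrix (Fin n) (Fin n) ℂ) (i : Fin n),
      star (Pi.single i 1 : Fin n → ℂ) ⬝ᵥ (M *ᵥ Pi.single i 1) = M i i := by
    intro M i
    have hst : (star (Pi.single i 1 : Fin n → ℂ)) = Pi.single i 1 := by
      funext x
      simp [Pi.single_apply, apply_ite (star : ℂ → ℂ)]
    rw [hst]
    simp [Matrix.mulVec_single, dotProduct, Pi.single_apply]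
  by_cases hex : ∃ i, d i = 0
  · obtain ⟨i, hi⟩ := hex
    have hprod : ∏ j, d j = 0 := Finset.prod_eq_zero (Finset.mem_univ i) hi
    rw [hprod]
    have h1 := hAD.dotProduct_mulVec_nonneg (Pi.single i 1)
    rw [hsingle] at h1
    have h2 := hA.dotProduct_mulVec_nonneg (Pi.single i 1)
    rw [hsingle] at h2
    have hAii : A i i = 0 := by
      refine le_antisymm ?_ h2
      have : (Matrix.diagonal d - A) i i = - A i i := by
        simp [Matrix.sub_apply, Matrix.diagonal_apply_eq, hi]
      rw [this] at h1
      exact neg_nonneg.mp h1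
    have hzero : perm A = 0 := by
      rw [perm]
      refine Finset.sum_eq_zero fun σ _ => ?_
      refine Finset.prod_eq_zero (Finset.mem_univ (σ⁻¹ i)) ?_
      rw [← Equiv.Perm.mul_apply, mul_inv_cancel, Equiv.Perm.one_apply]
      exact col_eq_zero hA hAii _
    rw [hzero]
  · push_neg at hex
    obtain ⟨r, hdr, hrpos⟩ : ∃ r : Fin n → ℝ,
        (∀ i, d i = ((r i : ℝ) : ℂ)) ∧ ∀ i, 0 < r i := by
      refine ⟨fun i => (d i).re, fun i => ?_, fun i => ?_⟩
      · exact Complex.ext rfl (Complex.le_def.mp (hd i)).2.symm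
      · have h0 : (0:ℝ) ≤ (d i).re := by simpa using (Complex.le_def.mp (hd i)).1
        rcases h0.lt_or_eq with h | h
        · exact h
        · exact absurd (Complex.ext h.symm
            (by simpa using (Complex.le_def.mp (hd i)).2.symm)) (hex i)
    set g : Fin n → ℂ := fun i => (((Real.sqrt (r i))⁻¹ : ℝ) : ℂ) with hg
    set G : Matrix (Fin n) (Fin n) ℂ := Matrix.diagonal g with hG
    have hGH : Gᴴ = G := by
      rw [hG, Matrix.diagonal_conjTranspose]
      have hsg : star g = g := by funext i; simp [hg, Complex.conj_ofReal]
      rw [hsg]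
    have hent : ∀ i, g i * d i * g i = 1 := by
      intro i
      rw [hdr i]
      simp only [hg]
      have hsne : Real.sqrt (r i) ≠ 0 := ne_of_gt (Real.sqrt_pos.mpr (hrpos i))
      have hreal : ((Real.sqrt (r i))⁻¹ : ℝ) * r i * ((Real.sqrt (r i))⁻¹ : ℝ) = 1 := by
        rw [show r i = Real.sqrt (r i) * Real.sqrt (r i) from
          (Real.mul_self_sqrt (le_of_lt (hrpos i))).symm]
        field_simp
        rw [Real.sqrt_sq (Real.sqrt_nonneg _)]
      exact_mod_cast congrArg Complex.ofReal hreal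
    have hGDG : G * Matrix.diagonal d * G = 1 := by
      rw [hG, Matrix.diagonal_mul_diagonal, Matrix.diagonal_mul_diagonal]
      rw [show (fun i => g i * d i * g i) = fun _ => (1:ℂ) from funext hent]
      exact Matrix.diagonal_one
    set B : Matrix (Fin n) (Fin n) ℂ := G * A * G with hB
    have hBpsd : B.PosSemidef := by
      have h := hA.mul_mul_conjTranspose_same G
      rwa [hGH] at h
    have h1B : ((1 : Matrix (Fin n) (Fin n) ℂ) - B).PosSemidef := by
      have h := hAD.mul_mul_conjTranspose_same G
      rw [hGH] at h
      have heq : G * (Matrix.diagonal d - A) * G = 1 - B := by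
        rw [Matrix.mul_sub, Matrix.sub_mul, hGDG, hB]
      rwa [heq] at h
    have hentry : ∀ i j, B i j = g i * A i j * g j := by
      intro i j
      rw [hB, hG]
      simp [Matrix.mul_diagonal, Matrix.diagonal_mul]
    have hpB : perm B = ((∏ i, g i) * (∏ i, g i)) * perm A := by
      rw [perm, perm, Finset.mul_sum]
      refine Finset.sum_congr rfl fun σ _ => ?_
      simp_rw [hentry]
      rw [Finset.prod_mul_distrib, Finset.prod_mul_distrib]
      rw [Equiv.prod_comp σ g]
      ring
    have hc : (∏ i, d i) * ((∏ i, g i) * (∏ i, g i)) = 1 := by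
      rw [← Finset.prod_mul_distrib, ← Finset.prod_mul_distrib]
      refine Finset.prod_eq_one fun i _ => ?_
      rw [← hent i]; ring
    have hpA : perm A = (∏ i, d i) * perm B := by
      rw [hpB, ← mul_assoc, mul_comm (∏ i, d i) _]
      nth_rewrite 1 [show perm A = 1 * perm A from (one_mul _).symm]
      congr 1
      rw [mul_comm] at hc
      exact hc.symm
    calc perm A = (∏ i, d i) * perm B := hpA
      _ ≤ (∏ i, d i) * 1 :=
          mul_le_mul_of_nonneg_left (perm_le_one hBpsd h1B)
            (Finset.prod_nonneg fun i _ => hd i)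
      _ = ∏ i, d i := mul_one _
end

section
/- Let V be an n×n complex matrix with columns v_1,…,v_n, let A = V†V, and let y ∈ ℂⁿ satisfy ‖y‖² = n. Then (n!/nⁿ) · ∏_{i=1}^n |⟨v_i, y⟩|² ≤ per(A). -/
open Matrix Finset

/-- For `A = Vᴴ V` with columns `vᵢ` and `y` on the complex sphere of radius `√n`,
`(n!/nⁿ) ∏ᵢ |⟨vᵢ, y⟩|² ≤ per A`. -/
theorem stmt3 (n : ℕ) (V : Matrix (Fin n) (Fin n) ℂ) (y : Fin n → ℂ)
    (hy : ∑ i, ‖y i‖ ^ 2 = (n : ℝ)) :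
    (((n.factorial : ℝ) / (n : ℝ) ^ n) *
        ∏ i, ‖star (fun j => V j i) ⬝ᵥ y‖ ^ 2 : ℝ) ≤ (perm (Vᴴ * V)).re := by
  classical
  set c : Fin n → ℂ := fun k => star (fun j => V j k) ⬝ᵥ y with hc
  set u : (Fin n → Fin n) → ℂ :=
    fun f => ∑ σ : Equiv.Perm (Fin n), ∏ i, V (f i) (σ i) with hu
  set w : (Fin n → Fin n) → ℂ := fun f => ∏ i, y (f i) with hw
  -- sum of functions = product of sums
  have swap : ∀ (g : Fin n → Fin n → ℂ),
      ∑ f : Fin n → Fin n, ∏ i, g i (f i) = ∏ i, ∑ j, g i j := by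
    intro g
    rw [Finset.prod_univ_sum (fun _ => (univ : Finset (Fin n))) g,
      Fintype.piFinset_univ]
  have swapR : ∀ (g : Fin n → Fin n → ℝ),
      ∑ f : Fin n → Fin n, ∏ i, g i (f i) = ∏ i, ∑ j, g i j := by
    intro g
    rw [Finset.prod_univ_sum (fun _ => (univ : Finset (Fin n))) g,
      Fintype.piFinset_univ]
  -- inner product ⟨u, w⟩
  have hA : ∑ f : Fin n → Fin n, u f * (starRingEnd ℂ) (w f)
      = (n.factorial : ℂ) * (starRingEnd ℂ) (∏ k, c k) := by
    have : ∀ f : Fin n → Fin n, u f * (starRingEnd ℂ) (w f)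
        = ∑ σ : Equiv.Perm (Fin n), ∏ i, (V (f i) (σ i) * (starRingEnd ℂ) (y (f i))) := by
      intro f
      simp only [hu, hw, Finset.sum_mul, map_prod]
      refine Finset.sum_congr rfl fun σ _ => ?_
      rw [← Finset.prod_mul_distrib]
    rw [Finset.sum_congr rfl (fun f _ => this f), Finset.sum_comm]
    have : ∀ σ : Equiv.Perm (Fin n),
        ∑ f : Fin n → Fin n, ∏ i, (V (f i) (σ i) * (starRingEnd ℂ) (y (f i)))
          = (starRingEnd ℂ) (∏ k, c k) := by
      intro σ
      rw [swap (fun i j => V j (σ i) * (starRingEnd ℂ) (y j))]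
      have h1 : ∀ i, ∑ j, V j (σ i) * (starRingEnd ℂ) (y j) = (starRingEnd ℂ) (c (σ i)) := by
        intro i
        simp only [hc, dotProduct, map_sum, _root_.map_mul, Pi.star_apply, RCLike.star_def]
        refine Finset.sum_congr rfl fun j _ => ?_
        rw [Complex.conj_conj, mul_comm]
      rw [Finset.prod_congr rfl (fun i _ => h1 i), ← map_prod,
        Equiv.prod_comp σ (fun k => c k)]
    rw [Finset.sum_congr rfl (fun σ _ => this σ), Finset.sum_const, Finset.card_univ,
      Fintype.card_perm, Fintype.card_fin, nsmul_eq_mul]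
  -- norm of w
  have hB : ∑ f : Fin n → Fin n, ‖w f‖ ^ 2 = (n : ℝ) ^ n := by
    have : ∀ f : Fin n → Fin n, ‖w f‖ ^ 2 = ∏ i, ‖y (f i)‖ ^ 2 := by
      intro f; simp [hw, ← Finset.prod_pow]
    rw [Finset.sum_congr rfl (fun f _ => this f), swapR (fun _ j => (‖y j‖ ^ 2 : ℝ))]
    · rw [Finset.prod_congr rfl (fun i _ => hy), Finset.prod_const, Finset.card_univ,
        Fintype.card_fin]
  -- norm of u : n! * perm A
  have hC : ((∑ f : Fin n → Fin n, ‖u f‖ ^ 2 : ℝ) : ℂ)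
      = (n.factorial : ℂ) * perm (Vᴴ * V) := by
    have huf : ∀ f, ((‖u f‖ ^ 2 : ℝ) : ℂ) = u f * (starRingEnd ℂ) (u f) := by
      intro f
      rw [Complex.mul_conj, Complex.normSq_eq_norm_sq]
    rw [Complex.ofReal_sum, Finset.sum_congr rfl (fun f _ => huf f)]
    have expand : ∀ f, u f * (starRingEnd ℂ) (u f)
        = ∑ σ : Equiv.Perm (Fin n), ∑ τ : Equiv.Perm (Fin n),
            ∏ i, (V (f i) (τ i) * (starRingEnd ℂ) (V (f i) (σ i))) := by
      intro f
      simp only [hu, map_sum, Finset.sum_mul, Finset.mul_sum, map_prod]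
      refine Finset.sum_congr rfl fun σ _ => Finset.sum_congr rfl fun τ _ => ?_
      rw [← Finset.prod_mul_distrib]
    rw [Finset.sum_congr rfl (fun f _ => expand f), Finset.sum_comm]
    have step : ∀ σ : Equiv.Perm (Fin n),
        ∑ f : Fin n → Fin n, ∑ τ : Equiv.Perm (Fin n),
          ∏ i, (V (f i) (τ i) * (starRingEnd ℂ) (V (f i) (σ i)))
        = perm (Vᴴ * V) := by
      intro σ
      rw [Finset.sum_comm]
      have inner_step : ∀ τ : Equiv.Perm (Fin n),
          ∑ f : Fin n → Fin n, ∏ i, (V (f i) (τ i) * (starRingEnd ℂ) (V (f i) (σ i)))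
          = ∏ k, (Vᴴ * V) k (τ (σ.symm k)) := by
        intro τ
        rw [swap (fun i j => V j (τ i) * (starRingEnd ℂ) (V j (σ i)))]
        have h2 : ∀ i, ∑ j, V j (τ i) * (starRingEnd ℂ) (V j (σ i))
            = (Vᴴ * V) (σ i) (τ i) := by
          intro i
          simp only [Matrix.mul_apply, Matrix.conjTranspose_apply, RCLike.star_def]
          exact Finset.sum_congr rfl fun j _ => mul_comm _ _
        rw [Finset.prod_congr rfl (fun i _ => h2 i)]
        rw [← Equiv.prod_comp σ (fun k => (Vᴴ * V) k (τ (σ.symm k)))]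
        simp
      rw [Finset.sum_congr rfl (fun τ _ => inner_step τ)]
      have bij : ∑ τ : Equiv.Perm (Fin n), ∏ k, (Vᴴ * V) k (τ (σ.symm k))
          = ∑ π : Equiv.Perm (Fin n), ∏ k, (Vᴴ * V) k (π k) := by
        apply Fintype.sum_bijective (fun τ : Equiv.Perm (Fin n) => τ * σ⁻¹)
        · exact (Equiv.mulRight σ⁻¹).bijective
        · intro τ
          rfl
      rw [bij]; rfl
    rw [Finset.sum_congr rfl (fun σ _ => step σ), Finset.sum_const, Finset.card_univ,
      Fintype.card_perm, Fintype.card_fin, nsmul_eq_mul]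
  -- real parts
  set S : ℝ := ∑ f : Fin n → Fin n, ‖u f‖ ^ 2 with hS
  have hSnn : 0 ≤ S := Finset.sum_nonneg fun f _ => sq_nonneg _
  have hfac : (0 : ℝ) < n.factorial := by positivity
  have hre : (perm (Vᴴ * V)).re = S / n.factorial := by
    have : perm (Vᴴ * V) = ((S / n.factorial : ℝ) : ℂ) := by
      have hne : (n.factorial : ℂ) ≠ 0 := by
        exact_mod_cast (Nat.cast_ne_zero (R := ℂ)).2 n.factorial_ne_zero
      rw [Complex.ofReal_div, hC, Complex.ofReal_natCast, mul_div_cancel_left₀ _ hne]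
    rw [this, Complex.ofReal_re]
  -- Cauchy-Schwarz chain
  have hCS : ((n.factorial : ℝ) * ∏ k, ‖c k‖) ^ 2 ≤ S * (n : ℝ) ^ n := by
    have h1 : ‖∑ f : Fin n → Fin n, u f * (starRingEnd ℂ) (w f)‖
        = (n.factorial : ℝ) * ∏ k, ‖c k‖ := by
      rw [hA, norm_mul, RCLike.norm_conj, norm_prod]
      simp
    have h2 : ‖∑ f : Fin n → Fin n, u f * (starRingEnd ℂ) (w f)‖
        ≤ ∑ f : Fin n → Fin n, ‖u f‖ * ‖w f‖ := by
      refine (norm_sum_le _ _).trans_eq ?_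
      refine Finset.sum_congr rfl fun f _ => ?_
      rw [norm_mul, RCLike.norm_conj]
    have h3 : (∑ f : Fin n → Fin n, ‖u f‖ * ‖w f‖) ^ 2
        ≤ (∑ f : Fin n → Fin n, ‖u f‖ ^ 2) * ∑ f : Fin n → Fin n, ‖w f‖ ^ 2 :=
      Finset.sum_mul_sq_le_sq_mul_sq _ _ _
    calc ((n.factorial : ℝ) * ∏ k, ‖c k‖) ^ 2
        ≤ (∑ f : Fin n → Fin n, ‖u f‖ * ‖w f‖) ^ 2 := by
          apply sq_le_sq'
          · nlinarith [norm_nonneg (∑ f : Fin n → Fin n, u f * (starRingEnd ℂ) (w f)),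
              h1, h2, Finset.sum_nonneg (fun f (_ : f ∈ univ) =>
                mul_nonneg (norm_nonneg (u f)) (norm_nonneg (w f)))]
          · rw [← h1]; exact h2
      _ ≤ S * (n : ℝ) ^ n := by rw [hS, ← hB]; exact h3
  -- conclude
  have hpow : (0 : ℝ) < (n : ℝ) ^ n := by
    rcases Nat.eq_zero_or_pos n with h | h
    · simp [h]
    · positivity
  have hprod : ∏ i, ‖star (fun j => V j i) ⬝ᵥ y‖ ^ 2 = (∏ k, ‖c k‖) ^ 2 := by
    rw [← Finset.prod_pow]
  rw [hre, hprod]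
  rw [div_mul_eq_mul_div, div_le_div_iff₀ hpow hfac]
  nlinarith [hCS, Finset.prod_nonneg (fun k (_ : k ∈ (univ : Finset (Fin n))) =>
    norm_nonneg (c k)), hfac, hpow]
end

section
/- Let V be an n×n complex matrix with columns v_1,…,v_n. Suppose λ > 0 and α_1,…,α_n > 0 satisfy V·Diag(α)·V† ⪯ λI and ∏_i α_i ≥ 1, and suppose P is an n×n Hermitian positive semidefinite matrix with trace n. Then ∏_{i=1}^n v_i† P v_i ≤ λⁿ. -/
open Matrix Finset ComplexOrder

lemma psd_trace_nonneg {n : ℕ} {M : Matrix (Fin n) (Fin n) ℂ} (hM : M.PosSemidef) :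
    0 ≤ M.trace := by
  rw [Matrix.trace]
  apply Finset.sum_nonneg
  intro i _
  have := hM.dotProduct_mulVec_nonneg (Pi.single i 1)
  simpa [dotProduct, Matrix.mulVec, Pi.single_apply, Finset.sum_ite_eq,
    Matrix.diag] using this

lemma psd_trace_mul_nonneg {n : ℕ} {A B : Matrix (Fin n) (Fin n) ℂ}
    (hA : A.PosSemidef) (hB : B.PosSemidef) : 0 ≤ (A * B).trace := by
  obtain ⟨C, rfl⟩ : ∃ C : Matrix (Fin n) (Fin n) ℂ, A = Cᴴ * C := by
    open scoped MatrixOrder in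
    exact ⟨CFC.sqrt A, by
      rw [show (CFC.sqrt A)ᴴ = CFC.sqrt A from (CFC.sqrt_nonneg A).isSelfAdjoint.star_eq,
        CFC.sqrt_mul_sqrt_self A hA.nonneg]⟩
  rw [Matrix.mul_assoc, Matrix.trace_mul_comm]
  exact psd_trace_nonneg (hB.mul_mul_conjTranspose_same C)

/-- Weak duality for the convex relaxation of maximizing a product of linear forms:
if `V Diag(α) Vᴴ ⪯ λ I`, `∏ αᵢ ≥ 1`, `αᵢ > 0`, and `P ⪰ 0` is Hermitian with `Tr P = n`,
then `∏ᵢ vᵢᴴ P vᵢ ≤ λⁿ` (in the standard partial order on `ℂ`). -/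
theorem stmt4 (n : ℕ) (V : Matrix (Fin n) (Fin n) ℂ) (lam : ℝ) (α : Fin n → ℝ)
    (hlam : 0 < lam) (hα : ∀ i, 0 < α i) (hprod : 1 ≤ ∏ i, α i)
    (hpsd : (lam • (1 : Matrix (Fin n) (Fin n) ℂ) -
        V * Matrix.diagonal (fun i => (α i : ℂ)) * Vᴴ).PosSemidef)
    (P : Matrix (Fin n) (Fin n) ℂ) (hP : P.PosSemidef) (htr : P.trace = n) :
    ∏ i, (star (fun j => V j i) ⬝ᵥ P.mulVec (fun j => V j i)) ≤ ((lam ^ n : ℝ) : ℂ) := by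
  set x : Fin n → ℂ := fun i => star (fun j => V j i) ⬝ᵥ P.mulVec (fun j => V j i) with hxdef
  have hxnn : ∀ i, 0 ≤ x i := fun i => hP.dotProduct_mulVec_nonneg _
  set r : Fin n → ℝ := fun i => (x i).re with hrdef
  have hrnn : ∀ i, 0 ≤ r i := fun i => (Complex.le_def.mp (hxnn i)).1
  have hxr : ∀ i, x i = (r i : ℂ) := by
    intro i
    have h := Complex.le_def.mp (hxnn i)
    exact Complex.ext rfl h.2.symm
  set D : Matrix (Fin n) (Fin n) ℂ := Matrix.diagonal (fun i => (α i : ℂ)) with hDdef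
  -- diagonal of Vᴴ P V gives the x i
  have hdiag : ∀ i, (Vᴴ * P * V) i i = x i := by
    intro i
    simp only [hxdef, Matrix.mul_apply, Matrix.conjTranspose_apply, dotProduct,
      Matrix.mulVec, Pi.star_apply, Finset.sum_mul, Finset.mul_sum]
    rw [Finset.sum_comm]
    apply Finset.sum_congr rfl; intro k _
    apply Finset.sum_congr rfl; intro j _
    ring
  have ht : (P * (V * D * Vᴴ)).trace = ∑ i, (α i : ℂ) * x i := by
    have e1 : P * (V * D * Vᴴ) = (P * V * D) * Vᴴ := by
      simp [Matrix.mul_assoc]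
    rw [e1, Matrix.trace_mul_comm, ← Matrix.mul_assoc, ← Matrix.mul_assoc, hDdef]
    simp only [Matrix.trace, Matrix.diag, Matrix.mul_diagonal]
    exact Finset.sum_congr rfl fun i _ => by rw [hdiag i]; ring
  have h0 : 0 ≤ (P * (lam • (1 : Matrix (Fin n) (Fin n) ℂ) - V * D * Vᴴ)).trace :=
    psd_trace_mul_nonneg hP hpsd
  have htr' : (P * (lam • (1 : Matrix (Fin n) (Fin n) ℂ) - V * D * Vᴴ)).trace
      = ((lam * n : ℝ) : ℂ) - ∑ i, (α i : ℂ) * x i := by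
    rw [Matrix.mul_sub, Matrix.trace_sub, ht, Matrix.mul_smul, Matrix.mul_one,
      Matrix.trace_smul, htr]
    push_cast
    rw [Complex.real_smul]
  have hsum : ∑ i, α i * r i ≤ lam * n := by
    rw [htr'] at h0
    have : ∑ i, (α i : ℂ) * x i = ((∑ i, α i * r i : ℝ) : ℂ) := by
      push_cast
      exact Finset.sum_congr rfl fun i _ => by rw [hxr i]
    rw [this, ← Complex.ofReal_sub, Complex.zero_le_real, sub_nonneg] at h0
    exact h0
  -- real AM-GM part
  have main : ∏ i, r i ≤ lam ^ n := by
    rcases Nat.eq_zero_or_pos n with hn | hn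
    · subst hn; simp
    · set z : Fin n → ℝ := fun i => α i * r i with hzdef
      have hznn : ∀ i, 0 ≤ z i := fun i => mul_nonneg (hα i).le (hrnn i)
      have step1 : ∏ i, r i ≤ ∏ i, z i := by
        rw [hzdef]
        rw [Finset.prod_mul_distrib]
        exact le_mul_of_one_le_left (Finset.prod_nonneg fun i _ => hrnn i) hprod
      have hprodnn : 0 ≤ ∏ i, z i := Finset.prod_nonneg fun i _ => hznn i
      have amgm := Real.geom_mean_le_arith_mean Finset.univ (fun _ => 1) z
        (fun _ _ => zero_le_one) (by simp [hn]) (fun i _ => hznn i)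
      simp only [Real.rpow_one, one_mul, Finset.sum_const, Finset.card_univ,
        Fintype.card_fin, nsmul_eq_mul, mul_one] at amgm
      have hS : (∑ i, z i) / n ≤ lam := by
        rw [div_le_iff₀ (by exact_mod_cast hn)]
        simpa [hzdef, mul_comm] using hsum
      have h1 : (∏ i, z i) ^ ((n : ℝ)⁻¹) ≤ lam := amgm.trans hS
      have h2 : ∏ i, z i = ((∏ i, z i) ^ ((n : ℝ)⁻¹)) ^ n := by
        rw [← Real.rpow_natCast ((∏ i, z i) ^ ((n : ℝ)⁻¹)) n, ← Real.rpow_mul hprodnn,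
          inv_mul_cancel₀ (by exact_mod_cast hn.ne'), Real.rpow_one]
      calc ∏ i, r i ≤ ∏ i, z i := step1
        _ = ((∏ i, z i) ^ ((n : ℝ)⁻¹)) ^ n := h2
        _ ≤ lam ^ n := pow_le_pow_left₀ (Real.rpow_nonneg hprodnn _) h1 n
  calc ∏ i, x i = ((∏ i, r i : ℝ) : ℂ) := by
        push_cast; exact Finset.prod_congr rfl fun i _ => hxr i
    _ ≤ ((lam ^ n : ℝ) : ℂ) := by exact_mod_cast main
end

section
/- For every positive integer r, 1/(2r) < γ − L_r < (r+2)/(2r(r+1)), where L_r = H_{r−1} − log r, H denotes harmonic numbers, and γ is the Euler–Mascheroni constant. -/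
open Real Filter

/-- `log (1+x) < x(2+x)/(2(1+x))` for `x > 0`. -/
lemma aux_log_lt (x : ℝ) (hx : 0 < x) :
    Real.log (1 + x) < x * (2 + x) / (2 * (1 + x)) := by
  have key : StrictMonoOn (fun y : ℝ => y * (2 + y) / (2 * (1 + y)) - Real.log (1 + y))
      (Set.Ici 0) := by
    apply strictMonoOn_of_deriv_pos (convex_Ici 0)
    · apply ContinuousOn.sub
      · apply ContinuousOn.div (by fun_prop) (by fun_prop)
        intro y hy; simp only [Set.mem_Ici] at hy; nlinarith
      · apply ContinuousOn.log (by fun_prop)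
        intro y hy; simp only [Set.mem_Ici] at hy; nlinarith
    · intro y hy
      rw [interior_Ici] at hy
      simp only [Set.mem_Ioi] at hy
      have h1 : (0:ℝ) < 1 + y := by linarith
      have h2 : (2 : ℝ) * (1 + y) ≠ 0 := by positivity
      have hd1 : HasDerivAt (fun z : ℝ => z * (2 + z) / (2 * (1 + z)))
          (((1 * (2 + y) + y * 1) * (2 * (1 + y)) - y * (2 + y) * (2 * 1)) / (2 * (1 + y))^2)
          y := by
        exact (((hasDerivAt_id y).mul ((hasDerivAt_id y).const_add 2)).div
          (((hasDerivAt_id y).const_add 1).const_mul 2) h2)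
      have hd2 : HasDerivAt (fun z : ℝ => Real.log (1 + z)) (1 / (1 + y)) y := by
        simpa using (((hasDerivAt_id y).const_add 1).log h1.ne')
      have hd := hd1.sub hd2
      rw [HasDerivAt.deriv (by exact hd : HasDerivAt
        (fun y : ℝ => y * (2 + y) / (2 * (1 + y)) - Real.log (1 + y)) _ y)]
      rw [sub_pos, div_lt_div_iff₀ h1 (by positivity)]
      nlinarith [mul_pos hy hy, mul_pos (mul_pos hy hy) hy]
  have h := key (Set.self_mem_Ici) (Set.mem_Ici.mpr hx.le) hx
  simp only [Real.log_one] at h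
  norm_num at h
  linarith

/-- `2x/(2+x) < log (1+x)` for `x > 0`. -/
lemma aux_lt_log (x : ℝ) (hx : 0 < x) :
    2 * x / (2 + x) < Real.log (1 + x) := by
  have key : StrictMonoOn (fun y : ℝ => Real.log (1 + y) - 2 * y / (2 + y))
      (Set.Ici 0) := by
    apply strictMonoOn_of_deriv_pos (convex_Ici 0)
    · apply ContinuousOn.sub
      · apply ContinuousOn.log (by fun_prop)
        intro y hy; simp only [Set.mem_Ici] at hy; nlinarith
      · apply ContinuousOn.div (by fun_prop) (by fun_prop)
        intro y hy; simp only [Set.mem_Ici] at hy; nlinarith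
    · intro y hy
      rw [interior_Ici] at hy
      simp only [Set.mem_Ioi] at hy
      have h1 : (0:ℝ) < 1 + y := by linarith
      have h2 : (2 : ℝ) + y ≠ 0 := by positivity
      have hd2 : HasDerivAt (fun z : ℝ => Real.log (1 + z)) (1 / (1 + y)) y := by
        simpa using (((hasDerivAt_id y).const_add 1).log h1.ne')
      have hd1 : HasDerivAt (fun z : ℝ => 2 * z / (2 + z))
          ((2 * 1 * (2 + y) - 2 * y * 1) / (2 + y)^2) y := by
        exact ((hasDerivAt_id y).const_mul 2).div ((hasDerivAt_id y).const_add 2) h2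
      have hd := hd2.sub hd1
      rw [HasDerivAt.deriv (by exact hd : HasDerivAt
        (fun y : ℝ => Real.log (1 + y) - 2 * y / (2 + y)) _ y)]
      rw [sub_pos, div_lt_div_iff₀ (by positivity) h1]
      nlinarith [mul_pos hy hy, mul_pos (mul_pos hy hy) hy]
  have h := key (Set.self_mem_Ici) (Set.mem_Ici.mpr hx.le) hx
  simp only [Real.log_one] at h
  norm_num at h
  linarith

lemma aux_t (c : ℝ) : Tendsto (fun k : ℕ => 1 / (2 * ((k:ℝ) + c))) atTop (nhds 0) := by
  have h1 : Tendsto (fun k : ℕ => 2 * ((k:ℝ) + c)) atTop atTop := by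
    apply Tendsto.const_mul_atTop two_pos
    exact tendsto_atTop_add_const_right _ c tendsto_natCast_atTop_atTop
  exact (tendsto_inv_atTop_zero.comp h1).congr (fun k => (one_div _).symm)

lemma aux_h1 : Tendsto (fun k : ℕ => (harmonic (k+1) : ℝ) - Real.log ((k:ℝ)+1)) atTop
    (nhds Real.eulerMascheroniConstant) := by
  have h := Real.tendsto_harmonic_sub_log.comp (tendsto_add_atTop_nat 1)
  exact h.congr (fun k => by push_cast [Function.comp]; ring_nf)

/-- For `n ≥ 1`, `harmonic n - log n - γ < 1/(2n)`. -/
lemma aux_upper (n : ℕ) (hn : 0 < n) :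
    (harmonic n : ℝ) - Real.log n - Real.eulerMascheroniConstant < 1 / (2 * n) := by
  set f : ℕ → ℝ := fun k => (harmonic (k + 1) : ℝ) - Real.log ((k:ℝ) + 1) - 1 / (2 * ((k:ℝ) + 1))
    with hf
  have hmono : StrictMono f := by
    apply strictMono_nat_of_lt_succ
    intro k
    have hk1 : (0:ℝ) < (k:ℝ) + 1 := by positivity
    have hk2 : (0:ℝ) < (k:ℝ) + 2 := by positivity
    have hlog : Real.log ((k:ℝ) + 2) - Real.log ((k:ℝ) + 1)
        = Real.log (1 + 1 / ((k:ℝ)+1)) := by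
      rw [← Real.log_div hk2.ne' hk1.ne']
      congr 1
      field_simp
      ring
    have hx : (0:ℝ) < 1 / ((k:ℝ)+1) := by positivity
    have key := aux_log_lt (1 / ((k:ℝ)+1)) hx
    have hval : (1 / ((k:ℝ)+1)) * (2 + 1 / ((k:ℝ)+1)) / (2 * (1 + 1 / ((k:ℝ)+1)))
        = (2*(k:ℝ)+3) / (2 * ((k:ℝ)+1) * ((k:ℝ)+2)) := by
      field_simp
      ring
    rw [hval] at key
    have hharm : (harmonic (k + 2) : ℝ) = (harmonic (k+1) : ℝ) + 1 / ((k:ℝ)+2) := by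
      push_cast [harmonic_succ (k+1)]
      ring
    simp only [hf]
    push_cast
    have h21 : Real.log ((k:ℝ) + 1 + 1) = Real.log ((k:ℝ)+2) := by congr 1; ring
    rw [hharm, h21]
    have e : Real.log ((k:ℝ)+2) = Real.log ((k:ℝ)+1) + Real.log (1 + 1/((k:ℝ)+1)) := by
      rw [← hlog]; ring
    rw [e]
    have hq : (2*(k:ℝ)+3) / (2 * ((k:ℝ)+1) * ((k:ℝ)+2))
        = 1/((k:ℝ)+2) + 1/(2*((k:ℝ)+1)) - 1/(2*((k:ℝ)+1+1)) := by
      field_simp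
      ring
    rw [hq] at key
    linarith
  have htend : Tendsto f atTop (nhds Real.eulerMascheroniConstant) := by
    have h := aux_h1.sub (aux_t 1)
    rw [sub_zero] at h
    exact h
  have hlt : f (n - 1) < Real.eulerMascheroniConstant := by
    calc f (n-1) < f (n-1+1) := hmono (Nat.lt_succ_self _)
    _ ≤ _ := hmono.monotone.ge_of_tendsto htend _
  have hn1 : n - 1 + 1 = n := Nat.succ_pred_eq_of_pos hn
  rw [hf] at hlt
  simp only [hn1] at hlt
  have : ((n - 1 : ℕ) : ℝ) + 1 = (n : ℝ) := by
    push_cast [Nat.cast_sub hn]; ring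
  rw [this] at hlt
  linarith

/-- For `n ≥ 1`, `1/(2(n+1)) < harmonic n - log n - γ`. -/
lemma aux_lower (n : ℕ) (hn : 0 < n) :
    1 / (2 * ((n:ℝ) + 1)) < (harmonic n : ℝ) - Real.log n - Real.eulerMascheroniConstant := by
  set f : ℕ → ℝ := fun k => (harmonic (k + 1) : ℝ) - Real.log ((k:ℝ) + 1) - 1 / (2 * ((k:ℝ) + 2))
    with hf
  have hanti : StrictAnti f := by
    apply strictAnti_nat_of_succ_lt
    intro k
    have hk1 : (0:ℝ) < (k:ℝ) + 1 := by positivity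
    have hk2 : (0:ℝ) < (k:ℝ) + 2 := by positivity
    have hk3 : (0:ℝ) < (k:ℝ) + 3 := by positivity
    have hlog : Real.log ((k:ℝ) + 2) - Real.log ((k:ℝ) + 1)
        = Real.log (1 + 1 / ((k:ℝ)+1)) := by
      rw [← Real.log_div hk2.ne' hk1.ne']
      congr 1
      field_simp
      ring
    have hx : (0:ℝ) < 1 / ((k:ℝ)+1) := by positivity
    have key := aux_lt_log (1 / ((k:ℝ)+1)) hx
    have hval : 2 * (1 / ((k:ℝ)+1)) / (2 + 1 / ((k:ℝ)+1)) = 2 / (2*(k:ℝ)+3) := by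
      field_simp
      ring
    rw [hval] at key
    have key2 : 1/((k:ℝ)+2) + 1/(2*((k:ℝ)+2)) - 1/(2*((k:ℝ)+3)) < 2 / (2*(k:ℝ)+3) := by
      have hq : 1/((k:ℝ)+2) + 1/(2*((k:ℝ)+2)) - 1/(2*((k:ℝ)+3))
          = (2*(k:ℝ)+7) / (2*((k:ℝ)+2)*((k:ℝ)+3)) := by
        field_simp
        ring
      rw [hq, div_lt_div_iff₀ (by positivity) (by positivity)]
      nlinarith [sq_nonneg (k:ℝ)]
    have hharm : (harmonic (k + 2) : ℝ) = (harmonic (k+1) : ℝ) + 1 / ((k:ℝ)+2) := by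
      push_cast [harmonic_succ (k+1)]
      ring
    simp only [hf]
    push_cast
    have h21 : Real.log ((k:ℝ) + 1 + 1) = Real.log ((k:ℝ)+2) := by congr 1; ring
    rw [hharm, h21]
    have e : Real.log ((k:ℝ)+2) = Real.log ((k:ℝ)+1) + Real.log (1 + 1/((k:ℝ)+1)) := by
      rw [← hlog]; ring
    rw [e]
    have h3 : 1/(2*((k:ℝ)+1+2)) = 1/(2*((k:ℝ)+3)) := by ring_nf
    rw [h3]
    linarith
  have htend : Tendsto f atTop (nhds Real.eulerMascheroniConstant) := by
    have h := aux_h1.sub (aux_t 2)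
    rw [sub_zero] at h
    exact h
  have hlt : Real.eulerMascheroniConstant < f (n - 1) := by
    calc Real.eulerMascheroniConstant ≤ f (n-1+1) :=
          hanti.antitone.le_of_tendsto htend _
    _ < f (n-1) := hanti (Nat.lt_succ_self _)
  rw [hf] at hlt
  have hn1 : n - 1 + 1 = n := Nat.succ_pred_eq_of_pos hn
  simp only [hn1] at hlt
  have e1 : ((n - 1 : ℕ) : ℝ) + 1 = (n : ℝ) := by
    push_cast [Nat.cast_sub hn]; ring
  have e2 : ((n - 1 : ℕ) : ℝ) + 2 = (n : ℝ) + 1 := by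
    push_cast [Nat.cast_sub hn]; ring
  rw [e1, e2] at hlt
  linarith

/-- For every positive integer `r`, with `L_r = H_{r−1} − log r`,
`1/(2r) < γ − L_r < (r+2)/(2r(r+1))`. -/
theorem stmt10 (r : ℕ) (hr : 0 < r) :
    1 / (2 * (r : ℝ)) <
        Real.eulerMascheroniConstant - ((harmonic (r - 1) : ℝ) - Real.log r) ∧
      Real.eulerMascheroniConstant - ((harmonic (r - 1) : ℝ) - Real.log r) <
        ((r : ℝ) + 2) / (2 * (r : ℝ) * ((r : ℝ) + 1)) := by
  have hr1 : (0:ℝ) < r := by exact_mod_cast hr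
  have hharm : (harmonic r : ℝ) = (harmonic (r-1) : ℝ) + 1 / (r : ℝ) := by
    have h := harmonic_succ (r - 1)
    rw [Nat.sub_add_cancel hr] at h
    rw [h]
    push_cast [Nat.cast_sub hr]
    ring
  have hu := aux_upper r hr
  have hl := aux_lower r hr
  rw [hharm] at hu hl
  have hhalf : 1 / (r:ℝ) = 2 * (1 / (2 * (r:ℝ))) := by field_simp
  constructor
  · linarith
  · have heq : ((r : ℝ) + 2) / (2 * (r : ℝ) * ((r : ℝ) + 1))
        = 1 / (r:ℝ) - 1 / (2 * ((r:ℝ)+1)) := by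
      field_simp
      ring
    rw [heq]
    linarith
end

section
/- Let A be an n×n HPSD matrix and D a diagonal matrix with positive diagonal and A ⪯ D. Then for any y ∈ ℂⁿ with ‖y‖² = n and any factorization A = V†V with columns v_i, one has (n!/nⁿ)·∏_{i=1}^n |⟨v_i, y⟩|² ≤ per(A) ≤ ∏_{i=1}^n D_{ii}. In particular, the pair (y, D) certifies a multiplicative approximation of per(A). -/
open Matrix Finset ComplexOrder

private lemma tele {n : ℕ} (b a : Fin n → ℂ) :
    ∏ i, b i - ∏ i, a i =
      ∑ j, ∏ i, (if i < j then b i else if i = j then b i - a i else a i) := by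
  induction n with
  | zero => simp
  | succ m ih =>
    rw [Fin.prod_univ_castSucc, Fin.prod_univ_castSucc (f := a), Fin.sum_univ_castSucc]
    have hlast : (∏ i : Fin (m+1),
        (if i < Fin.last m then b i else if i = Fin.last m then b i - a i else a i)) =
        (∏ i : Fin m, b i.castSucc) * (b (Fin.last m) - a (Fin.last m)) := by
      rw [Fin.prod_univ_castSucc]
      congr 1
      · exact Finset.prod_congr rfl fun k _ => if_pos (Fin.castSucc_lt_last k)
      · simp
    have hterm : ∀ jj : Fin m, (∏ i : Fin (m+1),
        (if i < jj.castSucc then b i else if i = jj.castSucc then b i - a i else a i)) =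
        (∏ k : Fin m, (if k < jj then b k.castSucc else if k = jj then
          b k.castSucc - a k.castSucc else a k.castSucc)) * a (Fin.last m) := by
      intro jj
      rw [Fin.prod_univ_castSucc]
      congr 1
      · refine Finset.prod_congr rfl fun k _ => ?_
        by_cases h1 : k < jj
        · rw [if_pos (by exact_mod_cast Fin.castSucc_lt_castSucc_iff.mpr h1), if_pos h1]
        · rw [if_neg (by exact_mod_cast fun h => h1 (Fin.castSucc_lt_castSucc_iff.mp h)),
            if_neg h1]
          by_cases h2 : k = jj
          · rw [if_pos (by rw [h2]), if_pos h2]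
          · rw [if_neg (fun h => h2 (Fin.castSucc_inj.mp h)), if_neg h2]
      · rw [if_neg (by simp [Fin.lt_def, Fin.is_lt, Nat.not_lt.mpr (Nat.le_of_lt_succ jj.castSucc.isLt)]),
          if_neg (by simp [Fin.ext_iff]; omega)]
    simp_rw [hterm]
    rw [hlast, ← Finset.sum_mul, ← ih]
    ring

private lemma psd_fam {n : ℕ} (P : Fin n → Matrix (Fin n) (Fin n) ℂ)
    (h : ∀ i, (P i).PosSemidef) :
    (Matrix.of fun f g : Fin n → Fin n => ∏ i, P i (f i) (g i)).PosSemidef := by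
  choose C hC using fun i => (by
    open scoped MatrixOrder Norms.L2Operator in
    obtain ⟨B, hB⟩ := CStarAlgebra.nonneg_iff_eq_star_mul_self.mp (h i).nonneg
    exact ⟨B, hB⟩ : ∃ B : Matrix (Fin n) (Fin n) ℂ, P i = Bᴴ * B)
  have key : (Matrix.of fun f g : Fin n → Fin n => ∏ i, P i (f i) (g i)) =
      (Matrix.of fun h f : Fin n → Fin n => ∏ i, C i (h i) (f i))ᴴ *
        (Matrix.of fun h f : Fin n → Fin n => ∏ i, C i (h i) (f i)) := by
    ext f g
    simp only [Matrix.mul_apply, Matrix.conjTranspose_apply, Matrix.of_apply, star_prod]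
    calc ∏ i, P i (f i) (g i)
        = ∏ i, ∑ k, star (C i k (f i)) * C i k (g i) := by
          refine Finset.prod_congr rfl fun i _ => ?_
          rw [hC i]
          simp [Matrix.mul_apply, Matrix.conjTranspose_apply]
      _ = ∑ x ∈ Fintype.piFinset (fun _ : Fin n => (univ : Finset (Fin n))),
            ∏ i, star (C i (x i) (f i)) * C i (x i) (g i) :=
          Finset.prod_univ_sum _ _
      _ = ∑ x : Fin n → Fin n, (∏ i, star (C i (x i) (f i))) * ∏ i, C i (x i) (g i) := by
          rw [Fintype.piFinset_univ]
          exact Finset.sum_congr rfl fun x _ => by rw [Finset.prod_mul_distrib]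
  rw [key]
  exact Matrix.posSemidef_conjTranspose_mul_self _

private lemma sum_bij_perm {n : ℕ} (X : (Fin n → Fin n) → ℂ) :
    ∑ f : Fin n → Fin n, (if Function.Bijective f then X f else 0) =
      ∑ σ : Equiv.Perm (Fin n), X ⇑σ := by
  classical
  rw [← Finset.sum_filter]
  refine Finset.sum_bij' (fun f hf => Equiv.ofBijective f (by simpa using hf))
    (fun σ _ => ⇑σ) ?_ ?_ ?_ ?_ ?_
  · intro f hf; exact Finset.mem_univ _
  · intro σ _; exact Finset.mem_filter.mpr ⟨Finset.mem_univ _, σ.bijective⟩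
  · intro f hf; rfl
  · intro σ _; exact Equiv.ext fun x => rfl
  · intro f hf; rfl

private lemma quad {n : ℕ} (A : Matrix (Fin n) (Fin n) ℂ) :
    star (fun f : Fin n → Fin n => if Function.Bijective f then (1:ℂ) else 0) ⬝ᵥ
      ((Matrix.of fun f g : Fin n → Fin n => ∏ i, A (f i) (g i)) *ᵥ
        (fun f => if Function.Bijective f then (1:ℂ) else 0)) =
      (n.factorial : ℂ) * perm A := by
  classical
  have inner : ∀ σ : Equiv.Perm (Fin n),
      (∑ τ : Equiv.Perm (Fin n), ∏ i, A (σ i) (τ i)) = perm A := by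
    intro σ
    calc ∑ τ : Equiv.Perm (Fin n), ∏ i, A (σ i) (τ i)
        = ∑ τ : Equiv.Perm (Fin n), ∏ j, A j (τ (σ⁻¹ j)) := by
          refine Finset.sum_congr rfl fun τ _ => ?_
          rw [← Equiv.prod_comp σ (fun j => A j (τ (σ⁻¹ j)))]
          simp
      _ = ∑ τ : Equiv.Perm (Fin n), ∏ j, A j (τ j) :=
          Fintype.sum_equiv (Equiv.mulRight σ⁻¹) _ _
            (fun τ => by simp [Equiv.Perm.mul_apply])
      _ = perm A := rfl
  calc star (fun f : Fin n → Fin n => if Function.Bijective f then (1:ℂ) else 0) ⬝ᵥ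
        ((Matrix.of fun f g : Fin n → Fin n => ∏ i, A (f i) (g i)) *ᵥ
          (fun f => if Function.Bijective f then (1:ℂ) else 0))
      = ∑ f : Fin n → Fin n, (if Function.Bijective f then
          (∑ g : Fin n → Fin n, (if Function.Bijective g then ∏ i, A (f i) (g i) else 0))
          else 0) := by
        unfold dotProduct Matrix.mulVec dotProduct
        refine Finset.sum_congr rfl fun f _ => ?_
        simp only [Pi.star_apply, Matrix.of_apply]
        by_cases hf : Function.Bijective f
        · simp only [if_pos hf, star_one, one_mul]
          refine Finset.sum_congr rfl fun g _ => ?_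
          by_cases hg : Function.Bijective g <;> simp [hg]
        · simp [hf]
    _ = ∑ σ : Equiv.Perm (Fin n), ∑ g : Fin n → Fin n,
          (if Function.Bijective g then ∏ i, A (σ i) (g i) else 0) :=
        sum_bij_perm _
    _ = ∑ σ : Equiv.Perm (Fin n), ∑ τ : Equiv.Perm (Fin n), ∏ i, A (σ i) (τ i) :=
        Finset.sum_congr rfl fun σ _ => sum_bij_perm _
    _ = ∑ σ : Equiv.Perm (Fin n), perm A := Finset.sum_congr rfl fun σ _ => inner σ
    _ = (n.factorial : ℂ) * perm A := by
        rw [Finset.sum_const, Finset.card_univ, Fintype.card_perm, Fintype.card_fin,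
          nsmul_eq_mul]

private lemma factor_nonneg {n : ℕ} {w : ℂ} (h : 0 ≤ (n.factorial : ℂ) * w) : 0 ≤ w := by
  rw [Complex.le_def] at h ⊢
  have hfac : (0:ℝ) < (n.factorial : ℝ) := by exact_mod_cast n.factorial_pos
  have hre : ((n.factorial : ℂ) * w).re = (n.factorial : ℝ) * w.re := by
    simp [Complex.mul_re]
  have him : ((n.factorial : ℂ) * w).im = (n.factorial : ℝ) * w.im := by
    simp [Complex.mul_im]
  obtain ⟨h1, h2⟩ := h
  rw [hre] at h1; rw [him] at h2
  constructor
  · simpa using nonneg_of_mul_nonneg_right (by simpa using h1) hfac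
  · simp only [Complex.zero_im] at h2 ⊢
    rcases mul_eq_zero.mp h2.symm with h | h
    · exact absurd h (ne_of_gt hfac)
    · exact h.symm

private lemma perm_nonneg {n : ℕ} {A : Matrix (Fin n) (Fin n) ℂ} (hA : A.PosSemidef) :
    0 ≤ perm A := by
  classical
  refine factor_nonneg (n := n) ?_
  rw [← quad A]
  exact (psd_fam (fun _ => A) (fun _ => hA)).dotProduct_mulVec_nonneg _

private lemma perm_mono {n : ℕ} {A B : Matrix (Fin n) (Fin n) ℂ}
    (hA : A.PosSemidef) (hBA : (B - A).PosSemidef) : perm A ≤ perm B := by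
  classical
  have hB : B.PosSemidef := by simpa using hBA.add hA
  set MA := Matrix.of fun f g : Fin n → Fin n => ∏ i, A (f i) (g i) with hMA
  set MB := Matrix.of fun f g : Fin n → Fin n => ∏ i, B (f i) (g i) with hMB
  have key : MB - MA = ∑ j : Fin n, Matrix.of fun f g : Fin n → Fin n =>
      ∏ i, (if i < j then B else if i = j then B - A else A) (f i) (g i) := by
    ext f g
    simp only [Matrix.sub_apply, Matrix.of_apply, Matrix.sum_apply, hMA, hMB]
    rw [tele (fun i => B (f i) (g i)) (fun i => A (f i) (g i))]
    refine Finset.sum_congr rfl fun j _ => Finset.prod_congr rfl fun i _ => ?_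
    by_cases h1 : i < j
    · simp [h1]
    · by_cases h2 : i = j <;> simp [h1, h2]
  have hdiff : (MB - MA).PosSemidef := by
    rw [key]
    refine Finset.sum_induction _ _ (fun x y hx hy => hx.add hy) Matrix.PosSemidef.zero
      (fun j _ => psd_fam _ fun i => ?_)
    by_cases h1 : i < j
    · simpa [h1] using hB
    · by_cases h2 : i = j
      · simpa [h1, h2] using hBA
      · simpa [h1, h2] using hA
  have h0 := hdiff.dotProduct_mulVec_nonneg (fun f : Fin n → Fin n => if Function.Bijective f then (1:ℂ) else 0)
  rw [Matrix.sub_mulVec, dotProduct_sub, quad A, quad B] at h0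
  have := factor_nonneg (n := n) (w := perm B - perm A) (by rw [mul_sub]; exact h0)
  exact sub_nonneg.mp this

private lemma perm_diagonal {n : ℕ} (v : Fin n → ℂ) :
    perm (Matrix.diagonal v) = ∏ i, v i := by
  classical
  unfold perm
  rw [Finset.sum_eq_single (1 : Equiv.Perm (Fin n))]
  · simp
  · intro σ _ hσ
    obtain ⟨i, hi⟩ : ∃ i, σ i ≠ i := by
      by_contra h
      push_neg at h
      exact hσ (Equiv.ext fun x => h x)
    exact Finset.prod_eq_zero (Finset.mem_univ i)
      (Matrix.diagonal_apply_ne v (Ne.symm hi))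
  · intro h; exact absurd (Finset.mem_univ _) h

private lemma perm_smul {n : ℕ} (c : ℂ) (A : Matrix (Fin n) (Fin n) ℂ) :
    perm (c • A) = c ^ n * perm A := by
  unfold perm
  rw [Finset.mul_sum]
  refine Finset.sum_congr rfl fun σ _ => ?_
  simp only [Matrix.smul_apply, smul_eq_mul]
  rw [Finset.prod_mul_distrib, Finset.prod_const, Finset.card_univ, Fintype.card_fin]

private lemma perm_rank1 {n : ℕ} (w : Fin n → ℂ) :
    perm (Matrix.of fun i j => w i * star (w j)) =
      (n.factorial : ℂ) * ((∏ i, ‖w i‖ ^ 2 : ℝ) : ℂ) := by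
  classical
  unfold perm
  have : ∀ σ : Equiv.Perm (Fin n),
      (∏ i, w i * star (w (σ i))) = ((∏ i, ‖w i‖ ^ 2 : ℝ) : ℂ) := by
    intro σ
    rw [Finset.prod_mul_distrib, ← star_prod, Equiv.prod_comp σ w,
      Complex.star_def, Complex.mul_conj, Complex.normSq_eq_norm_sq,
      norm_prod, ← Finset.prod_pow]

  simp only [Matrix.of_apply, this]
  rw [Finset.sum_const, Finset.card_univ, Fintype.card_perm, Fintype.card_fin, nsmul_eq_mul]

private lemma vecMulVec_psd {n : ℕ} (y : Fin n → ℂ) :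
    (Matrix.vecMulVec y (star y)).PosSemidef := by
  refine Matrix.PosSemidef.of_dotProduct_mulVec_nonneg ?_ ?_
  · ext i j
    simp [Matrix.conjTranspose_apply, Matrix.vecMulVec_apply, mul_comm]
  · intro x
    have hmv : Matrix.vecMulVec y (star y) *ᵥ x = (star y ⬝ᵥ x) • y := by
      ext i
      simp only [Matrix.mulVec, Matrix.vecMulVec_apply, dotProduct, Pi.smul_apply,
        smul_eq_mul, Finset.sum_mul, Finset.mul_sum]
      exact Finset.sum_congr rfl fun k _ => by ring
    rw [hmv]
    have : star x ⬝ᵥ ((star y ⬝ᵥ x) • y) = (star y ⬝ᵥ x) * (star x ⬝ᵥ y) := by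
      simp [dotProduct_smul, smul_eq_mul, mul_comm]
    rw [this]
    have hsx : star x ⬝ᵥ y = star (star y ⬝ᵥ x) := by
      simp only [dotProduct, star_sum, star_mul', star_star, Pi.star_apply]
      exact Finset.sum_congr rfl fun k _ => (mul_comm _ _)
    rw [hsx]
    exact mul_star_self_nonneg _

private lemma dot_self_eq {n : ℕ} (x : Fin n → ℂ) :
    star x ⬝ᵥ x = ((∑ i, ‖x i‖ ^ 2 : ℝ) : ℂ) := by
  push_cast
  refine Finset.sum_congr rfl fun i _ => ?_
  simp only [Pi.star_apply, Complex.star_def]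
  rw [mul_comm, Complex.mul_conj, Complex.normSq_eq_norm_sq]
  push_cast
  ring

private lemma big_psd {n : ℕ} (y : Fin n → ℂ) (hy : ∑ i, ‖y i‖ ^ 2 = (n : ℝ)) :
    ((n : ℂ) • (1 : Matrix (Fin n) (Fin n) ℂ) - Matrix.vecMulVec y (star y)).PosSemidef := by
  refine Matrix.PosSemidef.of_dotProduct_mulVec_nonneg ?_ ?_
  · refine Matrix.IsHermitian.sub ?_ (vecMulVec_psd y).1
    rw [Matrix.IsHermitian, Matrix.conjTranspose_smul]
    simp
  · intro x
    rw [Matrix.sub_mulVec, dotProduct_sub]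
    have h1 : star x ⬝ᵥ ((n : ℂ) • (1 : Matrix (Fin n) (Fin n) ℂ)) *ᵥ x =
        (n : ℂ) * ((∑ i, ‖x i‖ ^ 2 : ℝ) : ℂ) := by
      rw [Matrix.smul_mulVec, Matrix.one_mulVec, dotProduct_smul,
        smul_eq_mul, dot_self_eq]
    have h2 : star x ⬝ᵥ Matrix.vecMulVec y (star y) *ᵥ x =
        ((‖star x ⬝ᵥ y‖ ^ 2 : ℝ) : ℂ) := by
      have hmv : Matrix.vecMulVec y (star y) *ᵥ x = (star y ⬝ᵥ x) • y := by
        ext i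
        simp only [Matrix.mulVec, Matrix.vecMulVec_apply, dotProduct, Pi.smul_apply,
          smul_eq_mul, Finset.sum_mul, Finset.mul_sum]
        exact Finset.sum_congr rfl fun k _ => by ring
      have hsx : star y ⬝ᵥ x = star (star x ⬝ᵥ y) := by
        simp only [dotProduct, star_sum, star_mul', star_star, Pi.star_apply]
        exact Finset.sum_congr rfl fun k _ => (mul_comm _ _)
      rw [hmv, dotProduct_smul, smul_eq_mul, hsx, mul_comm,
        Complex.star_def, Complex.mul_conj, Complex.normSq_eq_norm_sq]
    rw [h1, h2]
    have key : ‖star x ⬝ᵥ y‖ ^ 2 ≤ (n : ℝ) * ∑ i, ‖x i‖ ^ 2 := by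
      have hcs : ‖star x ⬝ᵥ y‖ ≤ ∑ i, ‖x i‖ * ‖y i‖ := by
        refine le_trans (norm_sum_le _ _) (le_of_eq ?_)
        refine Finset.sum_congr rfl fun i _ => ?_
        simp [norm_mul]
      have h2' : (∑ i, ‖x i‖ * ‖y i‖) ^ 2 ≤ (∑ i, ‖x i‖ ^ 2) * ∑ i, ‖y i‖ ^ 2 :=
        Finset.sum_mul_sq_le_sq_mul_sq _ _ _
      calc ‖star x ⬝ᵥ y‖ ^ 2 ≤ (∑ i, ‖x i‖ * ‖y i‖) ^ 2 := by
            have := norm_nonneg (star x ⬝ᵥ y)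
            nlinarith [Finset.sum_nonneg (fun i (_ : i ∈ univ) =>
              mul_nonneg (norm_nonneg (x i)) (norm_nonneg (y i)))]
        _ ≤ (∑ i, ‖x i‖ ^ 2) * ∑ i, ‖y i‖ ^ 2 := h2'
        _ = (n : ℝ) * ∑ i, ‖x i‖ ^ 2 := by rw [hy, mul_comm]
    rw [Complex.le_def]
    constructor
    · simp only [Complex.sub_re, Complex.mul_re, Complex.natCast_re, Complex.ofReal_re,
        Complex.natCast_im, Complex.ofReal_im, Complex.zero_re]
      nlinarith
    · simp [Complex.mul_im, ← Complex.ofReal_pow]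

/-- Certificate of approximation: if `A = Vᴴ V ⪯ D` with `D` diagonal with positive
diagonal entries `dᵢ`, and `y` lies on the complex sphere of radius `√n`, then
`(n!/nⁿ) ∏ᵢ |⟨vᵢ, y⟩|² ≤ per A ≤ ∏ᵢ Dᵢᵢ`. -/
theorem stmt17 (n : ℕ) (V : Matrix (Fin n) (Fin n) ℂ) (d : Fin n → ℝ)
    (hd : ∀ i, 0 < d i)
    (hAD : (Matrix.diagonal (fun i => (d i : ℂ)) - Vᴴ * V).PosSemidef)
    (y : Fin n → ℂ) (hy : ∑ i, ‖y i‖ ^ 2 = (n : ℝ)) :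
    (((n.factorial : ℝ) / (n : ℝ) ^ n) *
        ∏ i, ‖star (fun j => V j i) ⬝ᵥ y‖ ^ 2 : ℝ) ≤ (perm (Vᴴ * V)).re ∧
      (perm (Vᴴ * V)).re ≤ ∏ i, d i := by
  classical
  set A := Vᴴ * V with hAdef
  have hA : A.PosSemidef := Matrix.posSemidef_conjTranspose_mul_self V
  constructor
  · -- lower bound
    set w : Fin n → ℂ := fun i => star (fun j => V j i) ⬝ᵥ y with hw
    set B := Vᴴ * Matrix.vecMulVec y (star y) * V with hBdef
    have hB : B = Matrix.of fun i j => w i * star (w j) := by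
      ext i j
      simp only [hBdef, Matrix.mul_apply, Matrix.conjTranspose_apply,
        Matrix.vecMulVec_apply, Matrix.of_apply, hw, dotProduct, Pi.star_apply,
        star_sum, star_mul', star_star, Finset.sum_mul, Finset.mul_sum]
      exact Finset.sum_congr rfl fun l _ => Finset.sum_congr rfl fun k _ => by ring
    have hBpsd : B.PosSemidef := (vecMulVec_psd y).conjTranspose_mul_mul_same V
    have hsub : ((n : ℂ) • A - B).PosSemidef := by
      have hEq : (n : ℂ) • A - B =
          Vᴴ * ((n : ℂ) • (1 : Matrix (Fin n) (Fin n) ℂ) - Matrix.vecMulVec y (star y)) * V := by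
        rw [Matrix.mul_sub, Matrix.sub_mul, hAdef, hBdef]
        congr 1
        rw [Matrix.mul_smul, Matrix.mul_one, Matrix.smul_mul]
      rw [hEq]
      exact (big_psd y hy).conjTranspose_mul_mul_same V
    have hmono : perm B ≤ perm ((n : ℂ) • A) := perm_mono hBpsd hsub
    rw [perm_smul] at hmono
    rw [hB, perm_rank1 w] at hmono
    have hcast1 : (n.factorial : ℂ) = (((n.factorial : ℝ)) : ℂ) := by push_cast; ring
    have hcast2 : ((n : ℂ)) ^ n = ((((n : ℝ) ^ n : ℝ)) : ℂ) := by push_cast; ring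
    rw [hcast1, hcast2] at hmono
    have hre := (Complex.le_def.mp hmono).1
    rw [Complex.re_ofReal_mul, Complex.re_ofReal_mul, Complex.ofReal_re] at hre
    have hn : (0 : ℝ) < (n : ℝ) ^ n := by
      rcases Nat.eq_zero_or_pos n with h | h
      · simp [h]
      · exact pow_pos (by exact_mod_cast h) n
    rw [div_mul_eq_mul_div, div_le_iff₀ hn]
    calc (n.factorial : ℝ) * ∏ i, ‖w i‖ ^ 2 ≤ (n : ℝ) ^ n * (perm A).re := hre
      _ = (perm A).re * (n : ℝ) ^ n := mul_comm _ _
  · -- upper bound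
    have hD : perm A ≤ perm (Matrix.diagonal fun i => (d i : ℂ)) := perm_mono hA hAD
    rw [perm_diagonal] at hD
    have hdc : (∏ i, ((d i : ℝ) : ℂ)) = (((∏ i, d i : ℝ)) : ℂ) := by push_cast; ring
    rw [hdc] at hD
    have := (Complex.le_def.mp hD).1
    rwa [Complex.ofReal_re] at this
end
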